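/- Let F : Ω → Y be Gâteaux differentiable on the open set Ω ⊆ X and J : X → ℝ ∪ {+∞} proper, convex and lower semicontinuous, and set Φ₀(x) = ½‖F(x)‖² + J(x). Suppose x* ∈ Ω is a local minimizer of Φ₀ with J(x*) < +∞ and that F′(x*) is injective with closed range. Then x* is the unique minimizer over X of the linearized functional z ↦ ½‖F(x*) + F′(x*)(z − x*)‖² + J(z); equivalently, x* = prox_J^{H(x*)}(x* − F′(x*)†F(x*)) where H(x*) = F′(x*)*F′(x*) and F′(x*)† = (F′(x*)*F′(x*))⁻¹F′(x*)*. -/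

import Mathlib

open ContinuousLinearMap

open scoped Topology RealInnerProductSpace

/-- Fixed point property of a local minimizer: if `x*` is a local minimizer of
`Φ₀(x) = ½‖F(x)‖² + J(x)` with `J(x*) < +∞` and `F′(x*)` is injective with closed range,
then `x*` is the unique minimizer over `X` of the linearized functional
`z ↦ ½‖F(x*) + F′(x*)(z − x*)‖² + J(z)` (equivalently,
`x* = prox_J^{H(x*)}(x* − F′(x*)†F(x*))`). -/
theorem stmt_11 {X Y : Type*} [NormedAddCommGroup X] [InnerProductSpace ℝ X] [CompleteSpace X]
    [NormedAddCommGroup Y] [InnerProductSpace ℝ Y] [CompleteSpace Y]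
    (Ω : Set X) (hΩopen : IsOpen Ω) (hΩne : Ω.Nonempty)
    (F : X → Y) (F' : X → (X →L[ℝ] Y))
    (hdiff : ∀ x ∈ Ω, ∀ v : X,
      Filter.Tendsto (fun t : ℝ => t⁻¹ • (F (x + t • v) - F x))
        (nhdsWithin (0:ℝ) {(0:ℝ)}ᶜ) (nhds (F' x v)))
    (J : X → WithTop ℝ)
    (hproper : ∃ x, J x ≠ ⊤)
    (hconv : ∀ x y : X, ∀ a b : ℝ, 0 ≤ a → 0 ≤ b → a + b = 1 →
      J (a • x + b • y) ≤ (a : WithTop ℝ) * J x + (b : WithTop ℝ) * J y)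
    (hlsc : LowerSemicontinuous J)
    (xs : X) (hxsΩ : xs ∈ Ω) (hxsJ : J xs ≠ ⊤)
    (hmin : ∀ᶠ x in nhds xs,
      ((2⁻¹ * ‖F xs‖ ^ 2 : ℝ) : WithTop ℝ) + J xs
        ≤ ((2⁻¹ * ‖F x‖ ^ 2 : ℝ) : WithTop ℝ) + J x)
    (hinj : Function.Injective (F' xs)) (hcl : IsClosed (Set.range (F' xs))) :
    (∀ z : X,
      ((2⁻¹ * ‖F xs + (F' xs) (xs - xs)‖ ^ 2 : ℝ) : WithTop ℝ) + J xs
        ≤ ((2⁻¹ * ‖F xs + (F' xs) (z - xs)‖ ^ 2 : ℝ) : WithTop ℝ) + J z) ∧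
    (∀ p : X,
      (∀ z : X,
        ((2⁻¹ * ‖F xs + (F' xs) (p - xs)‖ ^ 2 : ℝ) : WithTop ℝ) + J p
          ≤ ((2⁻¹ * ‖F xs + (F' xs) (z - xs)‖ ^ 2 : ℝ) : WithTop ℝ) + J z) →
      p = xs) := by
  obtain ⟨jxs, hjxs⟩ := WithTop.ne_top_iff_exists.mp hxsJ
  have key : ∀ z : X,
      ((2⁻¹ * ‖F xs + (F' xs) (xs - xs)‖ ^ 2 : ℝ) : WithTop ℝ) + J xs
        ≤ ((2⁻¹ * ‖F xs + (F' xs) (z - xs)‖ ^ 2 : ℝ) : WithTop ℝ) + J z := by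
    intro z
    rcases eq_or_ne (J z) ⊤ with hz | hz
    · rw [hz, WithTop.add_top]; exact le_top
    obtain ⟨jz, hjz⟩ := WithTop.ne_top_iff_exists.mp hz
    rw [← hjxs, ← hjz, ← WithTop.coe_add, ← WithTop.coe_add, WithTop.coe_le_coe]
    simp only [sub_self, map_zero, add_zero]
    by_contra hcon
    push_neg at hcon
    set v := z - xs with hv
    set w := F' xs v with hw
    set δ := (2⁻¹ * ‖F xs‖ ^ 2 + jxs) - (2⁻¹ * ‖F xs + w‖ ^ 2 + jz) with hδ
    have hδpos : 0 < δ := by rw [hδ]; linarith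
    have hD := hdiff xs hxsΩ v
    have hne0 : ∀ᶠ t : ℝ in nhdsWithin (0:ℝ) {(0:ℝ)}ᶜ, t ≠ 0 := self_mem_nhdsWithin
    have ht0 : Filter.Tendsto (fun t : ℝ => t) (nhdsWithin (0:ℝ) {(0:ℝ)}ᶜ) (nhds 0) :=
      Filter.tendsto_id.mono_left nhdsWithin_le_nhds
    have ha : Filter.Tendsto (fun t : ℝ => F (xs + t • v))
        (nhdsWithin (0:ℝ) {(0:ℝ)}ᶜ) (nhds (F xs)) := by
      have h1 : Filter.Tendsto (fun t : ℝ => F xs + t • (t⁻¹ • (F (xs + t • v) - F xs)))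
          (nhdsWithin (0:ℝ) {(0:ℝ)}ᶜ) (nhds (F xs + (0:ℝ) • (F' xs v))) :=
        Filter.Tendsto.const_add _ (ht0.smul hD)
      rw [zero_smul, add_zero] at h1
      refine Filter.Tendsto.congr' (hne0.mono fun t ht => ?_) h1
      show F xs + t • (t⁻¹ • (F (xs + t • v) - F xs)) = F (xs + t • v)
      rw [smul_smul, mul_inv_cancel₀ ht, one_smul]
      abel
    have hb : Filter.Tendsto (fun t : ℝ => F xs + t • w)
        (nhdsWithin (0:ℝ) {(0:ℝ)}ᶜ) (nhds (F xs)) := by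
      have h1 : Filter.Tendsto (fun t : ℝ => F xs + t • w)
          (nhdsWithin (0:ℝ) {(0:ℝ)}ᶜ) (nhds (F xs + (0:ℝ) • w)) :=
        Filter.Tendsto.const_add _ (ht0.smul_const w)
      rwa [zero_smul, add_zero] at h1
    have hgap : Filter.Tendsto (fun t : ℝ => t⁻¹ • (F (xs + t • v) - (F xs + t • w)))
        (nhdsWithin (0:ℝ) {(0:ℝ)}ᶜ) (nhds 0) := by
      have h2 : Filter.Tendsto (fun t : ℝ => t⁻¹ • (F (xs + t • v) - F xs) - w)
          (nhdsWithin (0:ℝ) {(0:ℝ)}ᶜ) (nhds (F' xs v - w)) := hD.sub_const w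
      rw [← hw, sub_self] at h2
      refine Filter.Tendsto.congr' (hne0.mono fun t ht => ?_) h2
      show t⁻¹ • (F (xs + t • v) - F xs) - w = t⁻¹ • (F (xs + t • v) - (F xs + t • w))
      simp only [smul_sub, smul_add, smul_smul, inv_mul_cancel₀ ht, one_smul]
      abel
    have hφ : Filter.Tendsto
        (fun t : ℝ => t⁻¹ * (2⁻¹ * ‖F (xs + t • v)‖ ^ 2 - 2⁻¹ * ‖F xs + t • w‖ ^ 2))
        (nhdsWithin (0:ℝ) {(0:ℝ)}ᶜ) (nhds 0) := by
      have hIP0 : Filter.Tendsto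
          (fun t : ℝ => (inner ℝ (t⁻¹ • (F (xs + t • v) - (F xs + t • w)))
            (F (xs + t • v) + (F xs + t • w)) : ℝ))
          (nhdsWithin (0:ℝ) {(0:ℝ)}ᶜ) (nhds (inner ℝ (0:Y) (F xs + F xs))) :=
        hgap.inner (ha.add hb)
      rw [inner_zero_left] at hIP0
      have hIP := hIP0.const_mul (2⁻¹ : ℝ)
      rw [mul_zero] at hIP
      refine Filter.Tendsto.congr' (hne0.mono fun t ht => ?_) hIP
      show 2⁻¹ * (inner ℝ (t⁻¹ • (F (xs + t • v) - (F xs + t • w)))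
          (F (xs + t • v) + (F xs + t • w)) : ℝ)
        = t⁻¹ * (2⁻¹ * ‖F (xs + t • v)‖ ^ 2 - 2⁻¹ * ‖F xs + t • w‖ ^ 2)
      rw [real_inner_smul_left]
      have hid : (inner ℝ (F (xs + t • v) - (F xs + t • w))
          (F (xs + t • v) + (F xs + t • w)) : ℝ)
          = ‖F (xs + t • v)‖ ^ 2 - ‖F xs + t • w‖ ^ 2 := by
        generalize F (xs + t • v) = A
        generalize F xs + t • w = B
        rw [inner_sub_left, inner_add_right, inner_add_right,
          real_inner_self_eq_norm_sq, real_inner_self_eq_norm_sq, real_inner_comm B A]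
        ring
      rw [hid]; ring
    have hlt : ∀ᶠ t : ℝ in nhdsWithin (0:ℝ) {(0:ℝ)}ᶜ,
        t⁻¹ * (2⁻¹ * ‖F (xs + t • v)‖ ^ 2 - 2⁻¹ * ‖F xs + t • w‖ ^ 2) < δ :=
      hφ.eventually_lt_const hδpos
    have hminE : ∀ᶠ t : ℝ in nhds (0:ℝ),
        ((2⁻¹ * ‖F xs‖ ^ 2 : ℝ) : WithTop ℝ) + J xs
          ≤ ((2⁻¹ * ‖F (xs + t • v)‖ ^ 2 : ℝ) : WithTop ℝ) + J (xs + t • v) := by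
      have hcont : Filter.Tendsto (fun t : ℝ => xs + t • v) (nhds 0) (nhds xs) := by
        have h1 : Filter.Tendsto (fun t : ℝ => xs + t • v) (nhds (0:ℝ))
            (nhds (xs + (0:ℝ) • v)) :=
          Filter.Tendsto.const_add _ (Filter.tendsto_id.smul_const v)
        rwa [zero_smul, add_zero] at h1
      exact hcont.eventually hmin
    have hsub : nhdsWithin (0:ℝ) (Set.Ioi 0) ≤ nhdsWithin (0:ℝ) {(0:ℝ)}ᶜ :=
      nhdsWithin_mono 0 (fun t ht => ne_of_gt ht)
    have hlt' := hlt.filter_mono hsub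
    have hminE' : ∀ᶠ t : ℝ in nhdsWithin (0:ℝ) (Set.Ioi 0),
        ((2⁻¹ * ‖F xs‖ ^ 2 : ℝ) : WithTop ℝ) + J xs
          ≤ ((2⁻¹ * ‖F (xs + t • v)‖ ^ 2 : ℝ) : WithTop ℝ) + J (xs + t • v) :=
      hminE.filter_mono nhdsWithin_le_nhds
    have hpos : ∀ᶠ t : ℝ in nhdsWithin (0:ℝ) (Set.Ioi 0), 0 < t :=
      eventually_mem_nhdsWithin
    have hlt1 : ∀ᶠ t : ℝ in nhdsWithin (0:ℝ) (Set.Ioi 0), t < 1 :=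
      (Filter.tendsto_id.eventually_lt_const zero_lt_one).filter_mono nhdsWithin_le_nhds
    obtain ⟨t, hφt, hmint, htpos, ht1⟩ := (hlt'.and (hminE'.and (hpos.and hlt1))).exists
    have hgap2 : 2⁻¹ * ‖F (xs + t • v)‖ ^ 2 - 2⁻¹ * ‖F xs + t • w‖ ^ 2 < t * δ := by
      have h4 := mul_lt_mul_of_pos_left hφt htpos
      rwa [← mul_assoc, mul_inv_cancel₀ (ne_of_gt htpos), one_mul] at h4
    have hJc := hconv xs z (1 - t) t (by linarith) (le_of_lt htpos) (by ring)
    have hxt : (1 - t) • xs + t • z = xs + t • v := by rw [hv]; module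
    rw [hxt, ← hjxs, ← hjz, ← WithTop.coe_mul, ← WithTop.coe_mul, ← WithTop.coe_add] at hJc
    have hJxtne : J (xs + t • v) ≠ ⊤ := ne_top_of_le_ne_top WithTop.coe_ne_top hJc
    obtain ⟨jt, hjt⟩ := WithTop.ne_top_iff_exists.mp hJxtne
    rw [← hjt, WithTop.coe_le_coe] at hJc
    rw [← hjxs, ← hjt, ← WithTop.coe_add, ← WithTop.coe_add, WithTop.coe_le_coe] at hmint
    have hq : 2⁻¹ * ‖F xs + t • w‖ ^ 2
        ≤ (1 - t) * (2⁻¹ * ‖F xs‖ ^ 2) + t * (2⁻¹ * ‖F xs + w‖ ^ 2) := by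
      have e1 := norm_add_sq_real (F xs) (t • w)
      rw [real_inner_smul_right, norm_smul, Real.norm_eq_abs, mul_pow, sq_abs] at e1
      have e2 := norm_add_sq_real (F xs) w
      nlinarith [mul_nonneg (mul_nonneg (le_of_lt htpos) (by linarith : (0:ℝ) ≤ 1 - t))
        (sq_nonneg ‖w‖)]
    rw [hδ] at hgap2
    linarith [hmint, hgap2, hq, hJc]
  refine ⟨key, ?_⟩
  intro p hp
  by_contra hne
  have h1 := hp xs
  have h2 := key p
  simp only [sub_self, map_zero, add_zero] at h1 h2
  have hpne : J p ≠ ⊤ := by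
    intro h
    rw [h, WithTop.add_top] at h1
    rw [← hjxs, ← WithTop.coe_add] at h1
    exact (WithTop.not_top_le_coe _) h1
  obtain ⟨jp, hjp⟩ := WithTop.ne_top_iff_exists.mp hpne
  rw [← hjxs, ← hjp, ← WithTop.coe_add, ← WithTop.coe_add, WithTop.coe_le_coe] at h1 h2
  have hJm := hconv p xs 2⁻¹ 2⁻¹ (by norm_num) (by norm_num) (by norm_num)
  rw [← hjxs, ← hjp, ← WithTop.coe_mul, ← WithTop.coe_mul, ← WithTop.coe_add] at hJm
  have hJmne : J ((2⁻¹:ℝ) • p + (2⁻¹:ℝ) • xs) ≠ ⊤ :=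
    ne_top_of_le_ne_top WithTop.coe_ne_top hJm
  obtain ⟨jm, hjm⟩ := WithTop.ne_top_iff_exists.mp hJmne
  rw [← hjm, WithTop.coe_le_coe] at hJm
  have h3 := hp ((2⁻¹:ℝ) • p + (2⁻¹:ℝ) • xs)
  rw [← hjp, ← hjm, ← WithTop.coe_add, ← WithTop.coe_add, WithTop.coe_le_coe] at h3
  have hm : ((2⁻¹:ℝ) • p + (2⁻¹:ℝ) • xs) - xs = (2⁻¹:ℝ) • (p - xs) := by module
  rw [hm, map_smul] at h3
  have hune : F' xs (p - xs) ≠ 0 := by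
    intro h
    exact hne (sub_eq_zero.mp (hinj (by rw [h, map_zero])))
  have e1 : ‖F xs + F' xs (p - xs)‖ ^ 2
      = ‖F xs‖ ^ 2 + 2 * (inner ℝ (F xs) (F' xs (p - xs)) : ℝ) + ‖F' xs (p - xs)‖ ^ 2 :=
    norm_add_sq_real _ _
  have e2 : ‖F xs + (2⁻¹:ℝ) • F' xs (p - xs)‖ ^ 2
      = ‖F xs‖ ^ 2 + (inner ℝ (F xs) (F' xs (p - xs)) : ℝ)
        + 4⁻¹ * ‖F' xs (p - xs)‖ ^ 2 := by
    have e3 := norm_add_sq_real (F xs) ((2⁻¹:ℝ) • F' xs (p - xs))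
    rw [real_inner_smul_right, norm_smul, Real.norm_eq_abs, mul_pow, sq_abs] at e3
    rw [e3]; ring
  have hupos : 0 < ‖F' xs (p - xs)‖ ^ 2 := pow_pos (norm_pos_iff.mpr hune) 2
  linarith [h1, h2, h3, hJm, e1, e2, hupos]
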